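/- Let t be an integer such that q = t − 2 is a prime power. Then for every positive integer r and every integer n ≥ r there exists a family F of r-element subsets of [n] such that F is D_r(2,t)-free, F is D_r(t−2,t)-free, and |F| ≥ (∏_{k=1}^{∞} (1 − q^{−k}))·C(n,r), where C(n,r) denotes the binomial coefficient. -/

import Mathlib

/-- A family `F` of finsets of `α` is `D_r(s,t)`-free: it contains no `(r,s,t)`-daisy,
i.e. there are no disjoint `S, T` with `|S| = r - s`, `|T| = t` such that `S ∪ X ∈ F`
for every `s`-element subset `X` of `T`. -/
def IsDaisyFree {α : Type*} [DecidableEq α] (r s t : ℕ) (F : Finset (Finset α)) : Prop :=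
  ¬ ∃ S T : Finset α, S.card = r - s ∧ T.card = t ∧ Disjoint S T ∧
      ∀ X ⊆ T, X.card = s → S ∪ X ∈ F


open Finset

lemma tprod_le_partial {q : ℕ} (hq : 2 ≤ q) (r : ℕ) :
    (∏' k : ℕ, (1 - ((q : ℝ))⁻¹ ^ (k + 1))) ≤ ∏ k ∈ Finset.range r, (1 - ((q : ℝ))⁻¹ ^ (k + 1)) := by
  set f : ℕ → ℝ := fun k => 1 - ((q : ℝ))⁻¹ ^ (k + 1) with hf
  have hq1 : (1 : ℝ) ≤ (q : ℝ) := by exact_mod_cast hq.trans' one_le_two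
  have h0 : ∀ k, 0 ≤ f k := by
    intro k
    have h1 : ((q : ℝ))⁻¹ ≤ 1 := inv_le_one_of_one_le₀ hq1
    have h2 : (0:ℝ) ≤ ((q : ℝ))⁻¹ := by positivity
    have := pow_le_one₀ h2 h1 (n := k + 1)
    simp only [hf]; linarith
  have h1 : ∀ k, f k ≤ 1 := by
    intro k
    have : (0:ℝ) ≤ ((q : ℝ))⁻¹ ^ (k+1) := by positivity
    simp only [hf]; linarith
  have hanti : Antitone (fun s : Finset ℕ => ∏ i ∈ s, f i) := by
    intro s t hst
    calc ∏ i ∈ t, f i = (∏ i ∈ t \ s, f i) * ∏ i ∈ s, f i := (Finset.prod_sdiff hst).symm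
    _ ≤ 1 * ∏ i ∈ s, f i := by
        apply mul_le_mul_of_nonneg_right
        · exact Finset.prod_le_one (fun i _ => h0 i) (fun i _ => h1 i)
        · exact Finset.prod_nonneg (fun i _ => h0 i)
    _ = ∏ i ∈ s, f i := one_mul _
  have hbdd : BddBelow (Set.range fun s : Finset ℕ => ∏ i ∈ s, f i) := by
    refine ⟨0, ?_⟩
    rintro _ ⟨s, rfl⟩
    exact Finset.prod_nonneg (fun i _ => h0 i)
  have hhas : HasProd f (⨅ s : Finset ℕ, ∏ i ∈ s, f i) := tendsto_atTop_ciInf hanti hbdd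
  rw [hhas.tprod_eq]
  exact ciInf_le hbdd (Finset.range r)

lemma aux_pigeonhole {K : Type*} [Field K] [Fintype K] {q : ℕ} (hq : Fintype.card K = q)
    (g : Fin (q + 2) → Fin 2 → K) (h0 : ∀ i, g i ≠ 0)
    (hp : ∀ i j : Fin (q + 2), i ≠ j → ∀ c : K, g j ≠ c • g i) : False := by
  classical
  have hq2 : 2 ≤ q := hq ▸ Fintype.one_lt_card
  set f : Fin (q + 2) × Kˣ → {v : Fin 2 → K // v ≠ 0} :=
    fun p => ⟨(p.2 : K) • g p.1, smul_ne_zero (Units.ne_zero p.2) (h0 p.1)⟩ with hfdef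
  have hi : Function.Injective f := by
    rintro ⟨i, c⟩ ⟨j, d⟩ h
    simp only [hfdef, Subtype.mk.injEq] at h
    rcases eq_or_ne i j with rfl | hij
    · have hcd : (c : K) = d := by
        by_contra hne
        have : ((c : K) - d) • g i = 0 := by rw [sub_smul, h, sub_self]
        rcases smul_eq_zero.mp this with h' | h'
        · exact hne (sub_eq_zero.mp h')
        · exact h0 i h'
      simp [Prod.ext_iff, Units.ext_iff, hcd]
    · exfalso
      apply hp i j hij ((d : K)⁻¹ * c)
      rw [mul_smul, h]
      rw [inv_smul_smul₀ (Units.ne_zero d)]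
  have hcard := Fintype.card_le_of_injective f hi
  rw [Fintype.card_prod, Fintype.card_fin, Fintype.card_units, hq] at hcard
  have h2 : Fintype.card {v : Fin 2 → K // v ≠ 0} = q ^ 2 - 1 := by
    rw [Fintype.card_subtype_compl, Fintype.card_fun, Fintype.card_fin, hq,
      Fintype.card_subtype_eq]
  rw [h2] at hcard
  obtain ⟨m, rfl⟩ : ∃ m, q = m + 2 := ⟨q - 2, by omega⟩
  have e1 : (m + 2 + 2) * (m + 2 - 1) = m * m + 5 * m + 4 := by
    have : m + 2 - 1 = m + 1 := by omega
    rw [this]; ring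
  have e2 : (m + 2) ^ 2 - 1 = m * m + 4 * m + 3 := by
    have : (m + 2) ^ 2 = m * m + 4 * m + 4 := by ring
    omega
  rw [e1, e2] at hcard
  omega

lemma aux_quot {K V : Type*} [Field K] [AddCommGroup V] [Module K V] {ι κ : Type*}
    [Fintype ι] [Fintype κ] (a : ι → V) (b : κ → V)
    (h : LinearIndependent K (Sum.elim a b)) :
    LinearIndependent K
      (fun k => Submodule.mkQ (Submodule.span K (Set.range a)) (b k)) := by
  rw [Fintype.linearIndependent_iff]
  intro c hc
  have hmem : (∑ k, c k • b k) ∈ Submodule.span K (Set.range a) := by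
    rw [← Submodule.ker_mkQ (Submodule.span K (Set.range a)), LinearMap.mem_ker, map_sum]
    simpa using hc
  rw [Submodule.mem_span_range_iff_exists_fun] at hmem
  obtain ⟨d, hd⟩ := hmem
  have hz : ∑ u : ι ⊕ κ, (Sum.elim d (fun k => -c k)) u • Sum.elim a b u = 0 := by
    rw [Fintype.sum_sum_type]
    simp only [Sum.elim_inl, Sum.elim_inr, neg_smul]
    rw [hd, Finset.sum_neg_distrib]
    exact add_neg_cancel _
  have := Fintype.linearIndependent_iff.mp h _ hz
  intro k
  have := this (Sum.inr k)
  simpa using this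

lemma aux_dim2 {K : Type*} [Field K] [Fintype K] {q : ℕ} (hq : Fintype.card K = q)
    {W : Type*} [AddCommGroup W] [Module K W] [Module.Finite K W]
    (hW : Module.finrank K W = 2) (w : Fin (q + 2) → W)
    (h : ∀ f : Fin 2 → Fin (q + 2), Function.Injective f → LinearIndependent K (w ∘ f)) :
    False := by
  classical
  have hpair : ∀ i j : Fin (q + 2), i ≠ j → (w i ≠ 0 ∧ ∀ c : K, w j ≠ c • w i) := by
    intro i j hij
    have hinj : Function.Injective ![j, i] := by
      intro a b hab
      fin_cases a <;> fin_cases b <;> simp_all <;>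
        first
          | rfl
          | exact absurd hab hij
          | exact absurd hab (Ne.symm hij)
    have hli := h ![j, i] hinj
    have heq : w ∘ ![j, i] = ![w j, w i] := by
      funext k; fin_cases k <;> rfl
    rw [heq, linearIndependent_fin2] at hli
    exact ⟨hli.1, fun c hc => hli.2 c hc.symm⟩
  let e := (Module.finBasisOfFinrankEq K W hW).equivFun
  set g : Fin (q + 2) → Fin 2 → K := fun i => e (w i) with hg
  refine aux_pigeonhole hq g ?_ ?_
  · intro i
    obtain ⟨j, hj⟩ := exists_ne i
    have := (hpair i j (Ne.symm hj)).1
    simp only [hg, ne_eq]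
    intro hzero
    exact this (by simpa using e.map_eq_zero_iff.mp hzero)
  · intro i j hij c hc
    apply (hpair i j hij).2 c
    apply e.injective
    rw [map_smul]
    exact hc

lemma aux_dimq {K : Type*} [Field K] [Fintype K] {q : ℕ} (hq : Fintype.card K = q)
    {W : Type*} [AddCommGroup W] [Module K W] [Module.Finite K W]
    (hW : Module.finrank K W = q) (w : Fin (q + 2) → W)
    (h : ∀ f : Fin q → Fin (q + 2), Function.Injective f → LinearIndependent K (w ∘ f)) :
    False := by
  classical
  have hq2 : 2 ≤ q := hq ▸ Fintype.one_lt_card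
  haveI : Nonempty (Fin q) := ⟨⟨0, by omega⟩⟩
  set M : (Fin (q + 2) → K) →ₗ[K] W := Fintype.linearCombination K w with hM
  have hrange : LinearMap.range M = ⊤ := by
    rw [hM, Fintype.range_linearCombination]
    have hinj : Function.Injective (Fin.castLE (by omega : q ≤ q + 2)) :=
      Fin.castLE_injective _
    have hli := h _ hinj
    have hsp : Submodule.span K (Set.range (w ∘ Fin.castLE (by omega : q ≤ q + 2))) = ⊤ :=
      hli.span_eq_top_of_card_eq_finrank (by simp [hW])
    refine top_unique ?_
    rw [← hsp]
    apply Submodule.span_mono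
    rintro _ ⟨k, rfl⟩
    exact ⟨Fin.castLE (by omega) k, rfl⟩
  have hker : Module.finrank K (LinearMap.ker M) = 2 := by
    have h1 := LinearMap.finrank_range_add_finrank_ker M
    rw [hrange, finrank_top, hW, Module.finrank_fin_fun] at h1
    omega
  have hsupp : ∀ z : Fin (q + 2) → K, z ∈ LinearMap.ker M →
      ∀ i j : Fin (q + 2), i ≠ j → z i = 0 → z j = 0 → z = 0 := by
    intro z hz i j hij hzi hzj
    set X : Finset (Fin (q + 2)) := ({i, j} : Finset (Fin (q + 2)))ᶜ with hX
    have hXcard : X.card = q := by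
      rw [hX, Finset.card_compl, Finset.card_pair hij, Fintype.card_fin]
      omega
    set f : Fin q → Fin (q + 2) := fun k => (X.orderIsoOfFin hXcard k : Fin (q + 2)) with hf
    have hfinj : Function.Injective f := fun a c hac =>
      (X.orderIsoOfFin hXcard).injective (Subtype.ext hac)
    have hfmem : ∀ k, f k ∈ X := fun k => (X.orderIsoOfFin hXcard k).2
    have hli := h f hfinj
    have hz' : ∑ x : Fin (q + 2), z x • w x = 0 := by
      simpa [hM, Fintype.linearCombination_apply] using hz
    have hsum : ∑ k : Fin q, z (f k) • w (f k) = 0 := by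
      have h1 : ∑ k : Fin q, z (f k) • w (f k) = ∑ x ∈ X, z x • w x := by
        rw [← Finset.sum_coe_sort X (fun x => z x • w x)]
        exact Fintype.sum_equiv (X.orderIsoOfFin hXcard).toEquiv _ _ (fun k => rfl)
      rw [h1, ← hz']
      apply Finset.sum_subset (Finset.subset_univ X)
      intro x _ hxX
      have hx : x = i ∨ x = j := by
        rw [hX, Finset.mem_compl, not_not, Finset.mem_insert, Finset.mem_singleton] at hxX
        exact hxX
      rcases hx with rfl | rfl <;> simp [hzi, hzj]
    have hcoef := Fintype.linearIndependent_iff.mp hli (fun k => z (f k)) hsum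
    ext m
    by_cases hm : m ∈ X
    · obtain ⟨k, hk⟩ := (X.orderIsoOfFin hXcard).surjective ⟨m, hm⟩
      have hkm : f k = m := congrArg Subtype.val hk
      rw [← hkm]
      exact hcoef k
    · have hx : m = i ∨ m = j := by
        rw [hX, Finset.mem_compl, not_not, Finset.mem_insert, Finset.mem_singleton] at hm
        exact hm
      rcases hx with rfl | rfl <;> simp [hzi, hzj]
  set b := Module.finBasisOfFinrankEq K (LinearMap.ker M) hker with hb
  set xv : Fin (q + 2) → K := ((b 0 : LinearMap.ker M) : Fin (q + 2) → K) with hxv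
  set yv : Fin (q + 2) → K := ((b 1 : LinearMap.ker M) : Fin (q + 2) → K) with hyv
  have hrepr : ∀ zz : LinearMap.ker M,
      (zz : Fin (q + 2) → K) = b.repr zz 0 • xv + b.repr zz 1 • yv := by
    intro zz
    have hsr := congrArg (Subtype.val) (b.sum_repr zz)
    rw [Fin.sum_univ_two] at hsr
    rw [← hsr]
    push_cast [Submodule.coe_add, Submodule.coe_smul]
    rfl
  have hexists : ∀ j : Fin (q + 2), ∃ zz : LinearMap.ker M, zz ≠ 0 ∧
      (zz : Fin (q + 2) → K) j = 0 := by
    intro j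
    set φ : (LinearMap.ker M) →ₗ[K] K :=
      (LinearMap.proj j).comp (LinearMap.ker M).subtype with hφ
    have h1 := LinearMap.finrank_range_add_finrank_ker φ
    rw [hker] at h1
    have h2 : Module.finrank K (LinearMap.range φ) ≤ 1 := by
      have h3 := Submodule.finrank_le (LinearMap.range φ)
      rwa [Module.finrank_self] at h3
    have h3 : LinearMap.ker φ ≠ ⊥ := by
      intro hbot
      rw [hbot, finrank_bot] at h1
      omega
    obtain ⟨zz, hzz, hzzne⟩ := Submodule.exists_mem_ne_zero_of_ne_bot h3
    exact ⟨zz, hzzne, hzz⟩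
  have h0' : ∀ i, ¬(xv i = 0 ∧ yv i = 0) := by
    rintro i ⟨hxi, hyi⟩
    obtain ⟨j, hj⟩ := exists_ne i
    obtain ⟨zz, hzzne, hzzj⟩ := hexists j
    have hzi : (zz : Fin (q + 2) → K) i = 0 := by
      rw [hrepr zz]
      simp [hxi, hyi]
    have := hsupp _ zz.2 j i hj hzzj hzi
    exact hzzne (Subtype.ext this)
  set g : Fin (q + 2) → Fin 2 → K := fun i => ![xv i, yv i] with hg
  refine aux_pigeonhole hq g ?_ ?_
  · intro i hgi
    apply h0' i
    rw [hg] at hgi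
    exact ⟨by simpa using congrFun hgi 0, by simpa using congrFun hgi 1⟩
  · intro i j hij c hc
    rw [hg] at hc
    have hxj : xv j = c * xv i := by simpa using congrFun hc 0
    have hyj : yv j = c * yv i := by simpa using congrFun hc 1
    set zz : LinearMap.ker M := yv i • b 0 - xv i • b 1 with hzz
    have hzzv : (zz : Fin (q + 2) → K) = yv i • xv - xv i • yv := by
      rw [hzz]
      push_cast [Submodule.coe_sub, Submodule.coe_smul]
      rfl
    have hzi : (zz : Fin (q + 2) → K) i = 0 := by
      rw [hzzv]
      simp only [Pi.sub_apply, Pi.smul_apply, smul_eq_mul]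
      ring
    have hzj : (zz : Fin (q + 2) → K) j = 0 := by
      rw [hzzv]
      simp only [Pi.sub_apply, Pi.smul_apply, smul_eq_mul, hxj, hyj]
      ring
    have hz0 : zz = 0 := Subtype.ext (hsupp _ zz.2 i j hij hzi hzj)
    have hli := b.linearIndependent
    rw [Fintype.linearIndependent_iff] at hli
    have hcomb : ∑ k : Fin 2, (![yv i, -(xv i)]) k • b k = 0 := by
      rw [Fin.sum_univ_two]
      simp only [Matrix.cons_val_zero, Matrix.cons_val_one, Matrix.head_cons]
      have : yv i • b 0 + -xv i • b 1 = zz := by rw [hzz]; module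
      rw [this, hz0]
    have hres := hli ![yv i, -(xv i)] hcomb
    apply h0' i
    constructor
    · simpa using hres 1
    · simpa using hres 0

lemma aux_free {K : Type*} [Field K] [Fintype K] {q r n : ℕ} (hq : Fintype.card K = q)
    (vv : Fin n → (Fin r → K)) (s : ℕ) (hs : s = 2 ∨ s = q) (F : Finset (Finset (Fin n)))
    (hF : ∀ A ∈ F, A.card = r ∧ LinearIndependent K (fun a : A => vv a.1)) :
    IsDaisyFree r s (q + 2) F := by
  classical
  rintro ⟨S, T, hS, hT, hdisj, hall⟩
  have hq2 : 2 ≤ q := hq ▸ Fintype.one_lt_card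
  have hsle : s ≤ q + 2 := by rcases hs with rfl | rfl <;> omega
  obtain ⟨X₀, hX₀T, hX₀⟩ := Finset.exists_subset_card_eq (show s ≤ T.card by omega)
  have hmem₀ := hall X₀ hX₀T hX₀
  have hcard₀ := (hF _ hmem₀).1
  have hdisj₀ : Disjoint S X₀ := hdisj.mono_right hX₀T
  have hSX : (S ∪ X₀).card = S.card + X₀.card := Finset.card_union_of_disjoint hdisj₀
  have hsr : s ≤ r := by omega
  have hLI : ∀ X ⊆ T, X.card = s →
      LinearIndependent K (fun a : ↥(S ∪ X) => vv a.1) :=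
    fun X h1 h2 => (hF _ (hall X h1 h2)).2
  have hSLI : LinearIndependent K (fun a : S => vv a.1) := by
    refine (hLI X₀ hX₀T hX₀).comp
      (fun a : S => (⟨a.1, Finset.mem_union_left _ a.2⟩ : ↥(S ∪ X₀))) ?_
    intro a b hab
    simp only [Subtype.mk.injEq] at hab
    exact Subtype.ext hab
  set U : Submodule K (Fin r → K) :=
    Submodule.span K (Set.range (fun a : S => vv a.1)) with hU
  have hUrank : Module.finrank K U = r - s := by
    rw [hU, finrank_span_eq_card hSLI, Fintype.card_coe, hS]
  have hWrank : Module.finrank K ((Fin r → K) ⧸ U) = s := by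
    have h1 := Submodule.finrank_quotient_add_finrank U
    rw [hUrank, Module.finrank_fin_fun] at h1
    omega
  set w : Fin (q + 2) → (Fin r → K) ⧸ U :=
    fun i => Submodule.mkQ U (vv ((T.orderIsoOfFin hT i) : Fin n)) with hw
  have key : ∀ f : Fin s → Fin (q + 2), Function.Injective f →
      LinearIndependent K (w ∘ f) := by
    intro f hf
    have hinj2 : Function.Injective
        (fun k : Fin s => ((T.orderIsoOfFin hT (f k)) : Fin n)) := fun a b hab =>
      hf ((T.orderIsoOfFin hT).injective (Subtype.ext hab))
    set X : Finset (Fin n) :=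
      Finset.image (fun k : Fin s => ((T.orderIsoOfFin hT (f k)) : Fin n)) Finset.univ with hXdef
    have hXT : X ⊆ T := by
      intro x hx
      rw [hXdef, Finset.mem_image] at hx
      obtain ⟨k, _, rfl⟩ := hx
      exact (T.orderIsoOfFin hT (f k)).2
    have hXcard : X.card = s := by
      rw [hXdef, Finset.card_image_of_injective _ hinj2, Finset.card_univ, Fintype.card_fin]
    have hdisjX : Disjoint S X := hdisj.mono_right hXT
    have hLIX := hLI X hXT hXcard
    set e : (S : Finset (Fin n)) ⊕ (X : Finset (Fin n)) → ↥(S ∪ X) :=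
      Sum.elim (fun a => ⟨a.1, Finset.mem_union_left _ a.2⟩)
        (fun x => ⟨x.1, Finset.mem_union_right _ x.2⟩) with he
    have einj : Function.Injective e := by
      rintro (a | a) (c | c) hac <;>
        simp only [he, Sum.elim_inl, Sum.elim_inr, Subtype.mk.injEq] at hac
      · exact congrArg Sum.inl (Subtype.ext hac)
      · exfalso
        have hX : (a : Fin n) ∈ X := by rw [hac]; exact c.2
        exact Finset.disjoint_left.mp hdisjX a.2 hX
      · exfalso
        have hX : (c : Fin n) ∈ X := by rw [← hac]; exact a.2
        exact Finset.disjoint_left.mp hdisjX c.2 hX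
      · exact congrArg Sum.inr (Subtype.ext hac)
    have hsum : LinearIndependent K
        (Sum.elim (fun a : S => vv a.1) (fun x : X => vv x.1)) := by
      have h2 := hLIX.comp e einj
      have heq : ((fun a : ↥(S ∪ X) => vv a.1) ∘ e) =
          Sum.elim (fun a : S => vv a.1) (fun x : X => vv x.1) := by
        funext u
        cases u <;> rfl
      rwa [heq] at h2
    have hquot := aux_quot (fun a : S => vv a.1) (fun x : X => vv x.1) hsum
    refine hquot.comp (fun k : Fin s =>
      (⟨(T.orderIsoOfFin hT (f k) : Fin n), by
        rw [hXdef]; exact Finset.mem_image_of_mem _ (Finset.mem_univ k)⟩ : X)) ?_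
    intro a b hab
    simp only [Subtype.mk.injEq] at hab
    exact hinj2 hab
  rcases hs with rfl | rfl
  · exact aux_dim2 hq hWrank w key
  · exact aux_dimq hq hWrank w key

/-- If `q = t - 2` is a prime power, then for every `r ≥ 1` and `n ≥ r` there is a family `F`
of `r`-element subsets of `[n]` that is `D_r(2,t)`-free and `D_r(t-2,t)`-free, with
`|F| ≥ (∏_{k=1}^∞ (1 - q^{-k})) · C(n,r)`. -/
theorem daisy_free_dense_family (q t : ℕ) (hq : IsPrimePow q) (ht : t = q + 2)
    (r n : ℕ) (hr : 1 ≤ r) (hn : r ≤ n) :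
    ∃ F : Finset (Finset (Fin n)),
      (∀ A ∈ F, A.card = r) ∧
      IsDaisyFree r 2 t F ∧
      IsDaisyFree r (t - 2) t F ∧
      (∏' k : ℕ, (1 - ((q : ℝ))⁻¹ ^ (k + 1))) * (n.choose r : ℝ) ≤ (F.card : ℝ) := by
  classical
  subst ht
  obtain ⟨p, k, hp, hk, hpk⟩ := hq
  haveI : Fact p.Prime := ⟨hp.nat_prime⟩
  haveI : Fintype (GaloisField p k) := Fintype.ofFinite _
  set K := GaloisField p k with hK
  have hcard : Fintype.card K = q := by
    rw [← Nat.card_eq_fintype_card, hK, GaloisField.card p k hk.ne', hpk]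
  have hq2 : 2 ≤ q := hcard ▸ Fintype.one_lt_card
  set NLI : ℕ := Nat.card { s : Fin r → (Fin r → K) // LinearIndependent K s } with hNLI
  set Fam : (Fin n → (Fin r → K)) → Finset (Finset (Fin n)) := fun vv =>
    Finset.univ.filter (fun A : Finset (Fin n) =>
      A.card = r ∧ LinearIndependent K (fun a : A => vv a.1)) with hFam
  -- counting for a fixed A
  have key1 : ∀ A : Finset (Fin n), A.card = r →
      (Finset.univ.filter (fun vv : Fin n → (Fin r → K) =>
          LinearIndependent K (fun a : A => vv a.1))).card
        = NLI * (Fintype.card (Fin r → K)) ^ (n - r) := by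
    intro A hA
    rw [← Fintype.card_subtype]
    have e1 : {vv : Fin n → (Fin r → K) // LinearIndependent K (fun a : A => vv a.1)} ≃
        {pp : (∀ _i : {x : Fin n // x ∈ A}, Fin r → K) ×
              (∀ _i : {x : Fin n // ¬ x ∈ A}, Fin r → K) //
          LinearIndependent K (fun a : {x : Fin n // x ∈ A} => pp.1 a)} :=
      (Equiv.piEquivPiSubtypeProd (fun i : Fin n => i ∈ A) (fun _ => Fin r → K)).subtypeEquiv
        (fun vv => Iff.rfl)
    have e2 : {pp : (∀ _i : {x : Fin n // x ∈ A}, Fin r → K) ×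
              (∀ _i : {x : Fin n // ¬ x ∈ A}, Fin r → K) //
          LinearIndependent K (fun a : {x : Fin n // x ∈ A} => pp.1 a)} ≃
        {u : ∀ _i : {x : Fin n // x ∈ A}, Fin r → K //
            LinearIndependent K (fun a : {x : Fin n // x ∈ A} => u a)} ×
          (∀ _i : {x : Fin n // ¬ x ∈ A}, Fin r → K) :=
      Equiv.prodSubtypeFstEquivSubtypeProd
        (p := fun u : (∀ _i : {x : Fin n // x ∈ A}, Fin r → K) =>
          LinearIndependent K (fun a : {x : Fin n // x ∈ A} => u a))
    have eA : Fin r ≃ {x : Fin n // x ∈ A} := (A.orderIsoOfFin hA).toEquiv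
    have e3 : {u : ∀ _i : {x : Fin n // x ∈ A}, Fin r → K //
            LinearIndependent K (fun a : {x : Fin n // x ∈ A} => u a)} ≃
        {s : Fin r → (Fin r → K) // LinearIndependent K s} := by
      refine ((Equiv.arrowCongr eA (Equiv.refl (Fin r → K))).subtypeEquiv ?_).symm
      intro s
      exact (linearIndependent_equiv eA.symm (f := s)).symm
    rw [Fintype.card_congr (e1.trans (e2.trans (Equiv.prodCongr e3 (Equiv.refl _))))]
    rw [Fintype.card_prod, Fintype.card_fun, ← Nat.card_eq_fintype_card, ← hNLI]
    congr 2
    rw [Fintype.card_subtype_compl]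
    have : Fintype.card {x : Fin n // x ∈ A} = r := by
      rw [Fintype.card_coe, hA]
    rw [this, Fintype.card_fin]
  -- double counting
  have hswap : ∑ vv : Fin n → (Fin r → K), (Fam vv).card =
      (n.choose r) * (NLI * (Fintype.card (Fin r → K)) ^ (n - r)) := by
    have h1 : ∀ vv : Fin n → (Fin r → K), (Fam vv).card =
        ∑ A : Finset (Fin n),
          if A.card = r ∧ LinearIndependent K (fun a : A => vv a.1) then 1 else 0 := by
      intro vv
      rw [hFam, Finset.card_filter]
    rw [Finset.sum_congr rfl (fun vv _ => h1 vv), Finset.sum_comm]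
    have h2 : ∀ A : Finset (Fin n),
        (∑ vv : Fin n → (Fin r → K),
          if A.card = r ∧ LinearIndependent K (fun a : A => vv a.1) then 1 else 0) =
        if A.card = r then NLI * (Fintype.card (Fin r → K)) ^ (n - r) else 0 := by
      intro A
      by_cases hA : A.card = r
      · simp only [hA, true_and, if_true]
        rw [← key1 A hA, Finset.card_filter]
      · simp [hA]
    rw [Finset.sum_congr rfl (fun A _ => h2 A), ← Finset.sum_filter, Finset.sum_const,
      smul_eq_mul]
    congr 1
    have huniv : Finset.univ.filter (fun A : Finset (Fin n) => A.card = r) =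
        Finset.powersetCard r Finset.univ := by
      ext A
      simp [Finset.mem_powersetCard_univ]
    rw [huniv, Finset.card_powersetCard, Finset.card_univ, Fintype.card_fin]
  -- pigeonhole
  have hpig : ∃ vv : Fin n → (Fin r → K),
      (n.choose r) * (NLI * (Fintype.card (Fin r → K)) ^ (n - r)) ≤
        Fintype.card (Fin n → (Fin r → K)) * (Fam vv).card := by
    by_contra hcon
    push_neg at hcon
    have hlt := Finset.sum_lt_sum_of_nonempty (Finset.univ_nonempty)
      (fun vv _ => hcon vv)
    rw [← Finset.mul_sum, hswap, Finset.sum_const, Finset.card_univ, smul_eq_mul] at hlt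
    exact lt_irrefl _ hlt
  obtain ⟨vv, hvv⟩ := hpig
  refine ⟨Fam vv, ?_, ?_, ?_, ?_⟩
  · intro A hA
    exact ((Finset.mem_filter.mp hA).2).1
  · exact aux_free hcard vv 2 (Or.inl rfl) (Fam vv)
      (fun A hA => (Finset.mem_filter.mp hA).2)
  · have h22 : q + 2 - 2 = q := by omega
    rw [h22]
    exact aux_free hcard vv q (Or.inr rfl) (Fam vv)
      (fun A hA => (Finset.mem_filter.mp hA).2)
  -- the real bound
  · have hqpos : (0 : ℝ) < (q : ℝ) := by exact_mod_cast (by omega : 0 < q)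
    have hqne : (q : ℝ) ≠ 0 := ne_of_gt hqpos
    have hNLIeq : NLI = ∏ i : Fin r, (q ^ r - q ^ (i : ℕ)) := by
      have hr2 : r ≤ Module.finrank K (Fin r → K) := by rw [Module.finrank_fin_fun]
      rw [hNLI, card_linearIndependent hr2, Module.finrank_fin_fun, hcard]
    have hcV : Fintype.card (Fin r → K) = q ^ r := by
      rw [Fintype.card_fun, hcard, Fintype.card_fin]
    have hcF : Fintype.card (Fin n → (Fin r → K)) = (q ^ r) ^ n := by
      rw [Fintype.card_fun, hcV, Fintype.card_fin]
    rw [hcV, hcF] at hvv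
    have hreal : (n.choose r : ℝ) * ((NLI : ℝ) * ((q : ℝ) ^ r) ^ (n - r)) ≤
        ((q : ℝ) ^ r) ^ n * ((Fam vv).card : ℝ) := by
      exact_mod_cast hvv
    set P : ℝ := ∏ k ∈ Finset.range r, (1 - ((q : ℝ))⁻¹ ^ (k + 1)) with hPdef
    have hP : (NLI : ℝ) = P * (q : ℝ) ^ (r * r) := by
      rw [hNLIeq, Nat.cast_prod]
      have hc1 : ∀ i : Fin r, ((q ^ r - q ^ (i : ℕ) : ℕ) : ℝ) =
          (q : ℝ) ^ r - (q : ℝ) ^ (i : ℕ) := by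
        intro i
        rw [Nat.cast_sub (Nat.pow_le_pow_right (by omega) (le_of_lt i.2))]
        push_cast
        ring
      rw [Finset.prod_congr rfl (fun i _ => hc1 i)]
      rw [Fin.prod_univ_eq_prod_range (fun i => (q : ℝ) ^ r - (q : ℝ) ^ i) r]
      rw [← Finset.prod_range_reflect (fun k => (q : ℝ) ^ r - (q : ℝ) ^ k) r]
      have hq2' : (q : ℝ) ^ (r * r) = ∏ _k ∈ Finset.range r, (q : ℝ) ^ r := by
        rw [Finset.prod_const, Finset.card_range, ← pow_mul]
      rw [hPdef, hq2', ← Finset.prod_mul_distrib]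
      refine Finset.prod_congr rfl ?_
      intro j hj
      rw [Finset.mem_range] at hj
      rw [sub_mul, one_mul]
      congr 1
      have hsplit : (q : ℝ) ^ r = (q : ℝ) ^ (j + 1) * (q : ℝ) ^ (r - 1 - j) := by
        rw [← pow_add]
        congr 1
        omega
      rw [inv_pow, hsplit, inv_mul_cancel_left₀ (pow_ne_zero _ hqne)]
    have hpowsplit : ((q : ℝ) ^ r) ^ n = (q : ℝ) ^ (r * r) * ((q : ℝ) ^ r) ^ (n - r) := by
      rw [← pow_mul, ← pow_mul, ← pow_add]
      congr 1
      have : r * r + r * (n - r) = r * (r + (n - r)) := by rw [Nat.left_distrib]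
      rw [this, Nat.add_sub_cancel' hn]
    have hfinal : P * (n.choose r : ℝ) ≤ ((Fam vv).card : ℝ) := by
      have hD : (0 : ℝ) < (q : ℝ) ^ (r * r) * ((q : ℝ) ^ r) ^ (n - r) := by positivity
      rw [← mul_le_mul_iff_left₀ hD]
      calc P * (n.choose r : ℝ) * ((q : ℝ) ^ (r * r) * ((q : ℝ) ^ r) ^ (n - r))
          = (n.choose r : ℝ) * ((P * (q : ℝ) ^ (r * r)) * ((q : ℝ) ^ r) ^ (n - r)) := by ring
        _ = (n.choose r : ℝ) * ((NLI : ℝ) * ((q : ℝ) ^ r) ^ (n - r)) := by rw [hP]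
        _ ≤ ((q : ℝ) ^ r) ^ n * ((Fam vv).card : ℝ) := hreal
        _ = ((Fam vv).card : ℝ) * ((q : ℝ) ^ (r * r) * ((q : ℝ) ^ r) ^ (n - r)) := by
            rw [hpowsplit]; ring
    calc (∏' k : ℕ, (1 - ((q : ℝ))⁻¹ ^ (k + 1))) * (n.choose r : ℝ)
        ≤ P * (n.choose r : ℝ) :=
          mul_le_mul_of_nonneg_right (tprod_le_partial hq2 r) (Nat.cast_nonneg _)
      _ ≤ ((Fam vv).card : ℝ) := hfinal
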